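/- Let m be an even integer with m ≥ 14, let v = (v_1, …, v_t) be an (m,t)-vector, and let s be a nonnegative integer. Suppose B assigns to each column index (i,j), 1 ≤ i ≤ t, 0 ≤ j < m/2, a 3-element subset B(i,j) of {0, 1, …, m+s−1} such that B(i,j) ∩ {0, …, m−1} = {2j mod m, (v_i + 2j) mod m} (i.e., the first m rows of the extended matrix coincide with H_m(v) and its third 1 lies in one of the s added rows), and such that any two distinct sets B(i,j) and B(i',j') intersect in at most one point (i.e., the Tanner graph of the extended column-weight-3 matrix has girth at least 6). Then s ≥ t. In other words, the minimum number of rows that must be added to H_m(v) to obtain a girth-6 column-weight-3 parity-check matrix is at least t. -/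

import Mathlib

/-- let `m ≥ 14` be even, `v` an `(m,t)`-vector, and `s ≥ 0`.  Suppose `B`
assigns to each column index `(i, j)` a 3-element subset of `{0, …, m+s-1}` whose intersection
with `{0, …, m-1}` is `{2j mod m, (v i + 2j) mod m}` (so the first `m` rows of the extended
matrix coincide with `H_m(v)` and the third `1` of each column lies in one of the `s` added
rows), and such that any two distinct sets `B p`, `B q` meet in at most one point (i.e. the
Tanner graph of the extended column-weight-3 matrix has girth at least `6`).  Then `s ≥ t`:
at least `t` rows must be added to `H_m(v)` to obtain a girth-6 column-weight-3 parity-check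
matrix. -/
theorem statement12 (m t s : ℕ) (hm : Even m) (hm14 : 14 ≤ m)
    (v : Fin t → ℕ) (hodd : ∀ i, Odd (v i)) (hpos : ∀ i, 0 < v i)
    (hmono : StrictMono v) (hlt : ∀ i, v i < m)
    (B : Fin t × Fin (m / 2) → Finset ℕ)
    (hcard : ∀ p, (B p).card = 3)
    (hsub : ∀ p, B p ⊆ Finset.range (m + s))
    (hfirst : ∀ p : Fin t × Fin (m / 2),
      B p ∩ Finset.range m = {2 * (p.2 : ℕ) % m, (v p.1 + 2 * (p.2 : ℕ)) % m})
    (hmeet : ∀ p q, p ≠ q → (B p ∩ B q).card ≤ 1) :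
    t ≤ s := by
  have h2m : (2 : ℕ) ∣ m := hm.two_dvd
  -- the two base-row entries of a column are distinct (parity)
  have hdist : ∀ p : Fin t × Fin (m / 2),
      2 * (p.2 : ℕ) % m ≠ (v p.1 + 2 * (p.2 : ℕ)) % m := by
    intro p h
    have h1 := Nat.mod_mod_of_dvd (2 * (p.2 : ℕ)) h2m
    have h3 := Nat.mod_mod_of_dvd (v p.1 + 2 * (p.2 : ℕ)) h2m
    have ho : v p.1 % 2 = 1 := Nat.odd_iff.mp (hodd p.1)
    omega
  have hcard2 : ∀ p, (B p ∩ Finset.range m).card = 2 := by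
    intro p
    rw [hfirst p]
    rw [Finset.card_insert_of_notMem (by simpa using hdist p), Finset.card_singleton]
  have hone : ∀ p, (B p \ Finset.range m).card = 1 := by
    intro p
    have h := Finset.card_inter_add_card_sdiff (B p) (Finset.range m)
    have := hcard p
    have := hcard2 p
    omega
  have hne : ∀ p, (B p \ Finset.range m).Nonempty := by
    intro p
    rw [← Finset.card_pos, hone p]; norm_num
  set f : Fin t × Fin (m / 2) → ℕ := fun p => (B p \ Finset.range m).min' (hne p) with hf
  have hfmem : ∀ p, f p ∈ B p \ Finset.range m := fun p => Finset.min'_mem _ _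
  have hfB : ∀ p, f p ∈ B p := fun p => (Finset.mem_sdiff.mp (hfmem p)).1
  have hfge : ∀ p, m ≤ f p := by
    intro p
    have := (Finset.mem_sdiff.mp (hfmem p)).2
    simp only [Finset.mem_range, not_lt] at this
    exact this
  have hflt : ∀ p, f p < m + s := by
    intro p
    have := hsub p (hfB p)
    simpa using this
  -- fiber bound: each extra row serves at most m/2 columns
  have hfiber : ∀ r, (Finset.univ.filter (fun p => f p = r)).card ≤ m / 2 := by
    intro r
    set F := Finset.univ.filter (fun p : Fin t × Fin (m / 2) => f p = r) with hF
    rcases F.eq_empty_or_nonempty with hFe | hFne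
    · rw [hFe]; simp
    have hdisj : ∀ p ∈ F, ∀ q ∈ F, p ≠ q →
        Disjoint (B p ∩ Finset.range m) (B q ∩ Finset.range m) := by
      intro p hp q hq hpq
      rw [Finset.disjoint_left]
      intro x hxp hxq
      have hx : x ∈ B p ∩ B q := by
        simp only [Finset.mem_inter] at hxp hxq ⊢
        exact ⟨hxp.1, hxq.1⟩
      have hr : f p ∈ B p ∩ B q := by
        have hpr : f p = r := (Finset.mem_filter.mp hp).2
        have hqr : f q = r := (Finset.mem_filter.mp hq).2
        refine Finset.mem_inter.mpr ⟨hfB p, ?_⟩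
        rw [hpr, ← hqr]; exact hfB q
      have hle := Finset.card_le_one.mp (hmeet p q hpq) x hx (f p) hr
      have hxlt : x < m := by
        have := Finset.mem_inter.mp hxp
        simpa using this.2
      have := hfge p
      omega
    have hbu : (F.biUnion (fun p => B p ∩ Finset.range m)).card
        = ∑ p ∈ F, (B p ∩ Finset.range m).card := Finset.card_biUnion hdisj
    have hsubr : F.biUnion (fun p => B p ∩ Finset.range m) ⊆ Finset.range m := by
      intro x hx
      rcases Finset.mem_biUnion.mp hx with ⟨p, _, hp⟩
      exact (Finset.mem_inter.mp hp).2
    have hle := Finset.card_le_card hsubr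
    rw [hbu] at hle
    rw [Finset.card_range] at hle
    have hsum : ∑ p ∈ F, (B p ∩ Finset.range m).card = 2 * F.card := by
      rw [Finset.sum_congr rfl (fun p _ => hcard2 p), Finset.sum_const, smul_eq_mul,
        mul_comm]
    rw [hsum] at hle
    omega
  -- total count
  have hkey : (Finset.univ : Finset (Fin t × Fin (m / 2))).card
      = ∑ r ∈ Finset.Ico m (m + s), (Finset.univ.filter (fun p => f p = r)).card := by
    apply Finset.card_eq_sum_card_fiberwise
    intro p _
    rw [Finset.mem_coe, Finset.mem_Ico]
    exact ⟨hfge p, hflt p⟩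
  have htot : t * (m / 2) ≤ s * (m / 2) := by
    have h1 : (Finset.univ : Finset (Fin t × Fin (m / 2))).card = t * (m / 2) := by
      simp [Finset.card_univ]
    have h2 : ∑ r ∈ Finset.Ico m (m + s), (Finset.univ.filter (fun p => f p = r)).card
        ≤ s * (m / 2) := by
      calc ∑ r ∈ Finset.Ico m (m + s), (Finset.univ.filter (fun p => f p = r)).card
          ≤ ∑ _r ∈ Finset.Ico m (m + s), m / 2 :=
            Finset.sum_le_sum (fun r _ => hfiber r)
        _ = s * (m / 2) := by rw [Finset.sum_const, Nat.card_Ico, smul_eq_mul, Nat.add_sub_cancel_left]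
    omega
  have hm2 : 0 < m / 2 := by omega
  exact Nat.le_of_mul_le_mul_right htot hm2
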